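/- Let ν be a Lévy kernel on ℝⁿ and θ ≥ 1 with θ ∈ Θ_ν and tail condition (T_θ). Let f ∈ C²(ℝⁿ) satisfy sup_{|x|≥1} |x|^{1−θ} max(|∇f(x)|, |x|·‖∇²f(x)‖) < ∞. Then: if θ ∈ [1,2), 𝔍_ν[f](x) → 0 as |x| → ∞; and if θ ≥ 2, the function x ↦ (1+|x|)^{2−θ} · 𝔍_ν[f](x) is bounded on ℝⁿ. -/

import Mathlib

open MeasureTheory Filter ENNReal

noncomputable def levyJ {n : ℕ}
    (ν : EuclideanSpace ℝ (Fin n) → Measure (EuclideanSpace ℝ (Fin n)))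
    (f : EuclideanSpace ℝ (Fin n) → ℝ) (x : EuclideanSpace ℝ (Fin n)) : ℝ :=
  ∫ y, (f (x + y) - f x - fderiv ℝ f x y) ∂(ν x)

/-- `ν` is a Lévy kernel on `ℝⁿ`. -/
def IsLevyKernel {n : ℕ}
    (ν : EuclideanSpace ℝ (Fin n) → Measure (EuclideanSpace ℝ (Fin n))) : Prop :=
  ∀ x, ν x {0} = 0 ∧ (∫⁻ y, ENNReal.ofReal (min 1 (‖y‖ ^ 2)) ∂(ν x)) ≠ ⊤

/-- `θ ∈ Θ_ν`. -/
def MomentCondition {n : ℕ}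
    (ν : EuclideanSpace ℝ (Fin n) → Measure (EuclideanSpace ℝ (Fin n))) (θ : ℝ) : Prop :=
  ∃ M : ℝ≥0∞, M ≠ ⊤ ∧ ∀ x,
    (∫⁻ y, ENNReal.ofReal (if ‖y‖ < 1 then ‖y‖ ^ 2 else ‖y‖ ^ θ) ∂(ν x)) ≤ M

/-- Tail condition (T_θ): `lim_{r→∞} sup_x ∫_{|y|>r} |y|^θ ν(x,dy) = 0`. -/
def TailCondition {n : ℕ}
    (ν : EuclideanSpace ℝ (Fin n) → Measure (EuclideanSpace ℝ (Fin n))) (θ : ℝ) : Prop :=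
  Tendsto (fun r : ℝ => ⨆ x, ∫⁻ y in {y | r < ‖y‖}, ENNReal.ofReal (‖y‖ ^ θ) ∂(ν x))
    atTop (nhds 0)




lemma taylor2 {E : Type*} [NormedAddCommGroup E] [NormedSpace ℝ E] {f : E → ℝ}
    (hf : ContDiff ℝ 2 f) (x y : E) {K : ℝ}
    (hK : ∀ w ∈ segment ℝ x (x + y), ‖fderiv ℝ (fderiv ℝ f) w‖ ≤ K) :
    |f (x + y) - f x - fderiv ℝ f x y| ≤ K * ‖y‖ ^ 2 := by
  have hf' : ContDiff ℝ 1 (fderiv ℝ f) := hf.fderiv_right (by norm_num)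
  have hd : Differentiable ℝ f := hf.differentiable two_ne_zero
  set s : Set E := segment ℝ x (x + y) with hs
  have hconv : Convex ℝ s := convex_segment _ _
  have hxs : x ∈ s := left_mem_segment _ _ _
  have hys : x + y ∈ s := right_mem_segment _ _ _
  have hdist : ∀ z ∈ s, ‖z - x‖ ≤ ‖y‖ := by
    rintro z ⟨a, b, ha, hb, hab, rfl⟩
    have : a • x + b • (x + y) - x = b • y := by
      have hx : a • x + b • x = x := by rw [← add_smul, hab, one_smul]
      rw [smul_add, ← add_assoc, hx]; abel
    rw [this, norm_smul, Real.norm_eq_abs, abs_of_nonneg hb]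
    nlinarith [norm_nonneg y]
  -- first MVT: fderiv f is K-Lipschitz on s
  have h1 : ∀ z ∈ s, ‖fderiv ℝ f z - fderiv ℝ f x‖ ≤ K * ‖y‖ := by
    intro z hz
    calc ‖fderiv ℝ f z - fderiv ℝ f x‖ ≤ K * ‖z - x‖ :=
          hconv.norm_image_sub_le_of_norm_fderiv_le
            (fun w _ => (hf'.differentiable one_ne_zero).differentiableAt) hK hxs hz
      _ ≤ K * ‖y‖ := by
          have hK0 : 0 ≤ K := le_trans (norm_nonneg (fderiv ℝ (fderiv ℝ f) x)) (hK x hxs)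
          exact mul_le_mul_of_nonneg_left (hdist z hz) hK0
  -- second MVT applied to g z = f z - fderiv f x z
  set g : E → ℝ := fun z => f z - fderiv ℝ f x z with hg
  have hgd : ∀ z, DifferentiableAt ℝ g z := fun z =>
    (hd z).sub ((fderiv ℝ f x).differentiableAt)
  have hgderiv : ∀ z, fderiv ℝ g z = fderiv ℝ f z - fderiv ℝ f x := by
    intro z
    rw [hg]
    rw [fderiv_fun_sub (hd z) ((fderiv ℝ f x).differentiableAt), (fderiv ℝ f x).fderiv]
  have h2 : ‖g (x + y) - g x‖ ≤ K * ‖y‖ * ‖x + y - x‖ := by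
    apply hconv.norm_image_sub_le_of_norm_fderiv_le (fun w _ => hgd w) ?_ hxs hys
    intro w hw; rw [hgderiv w]; exact h1 w hw
  have h3 : g (x + y) - g x = f (x + y) - f x - fderiv ℝ f x y := by
    simp only [hg, map_add]; ring
  rw [h3] at h2
  rw [← Real.norm_eq_abs]
  calc ‖f (x + y) - f x - fderiv ℝ f x y‖ ≤ K * ‖y‖ * ‖x + y - x‖ := h2
    _ = K * ‖y‖ ^ 2 := by rw [add_sub_cancel_left]; ring



lemma growth_bounds {E : Type*} [NormedAddCommGroup E] [NormedSpace ℝ E] [ProperSpace E]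
    {f : E → ℝ} (hf : ContDiff ℝ 2 f) {θ M : ℝ} (hθ : 1 ≤ θ)
    (hM : ∀ x : E, 1 ≤ ‖x‖ → ‖x‖ ^ (1 - θ) * ‖fderiv ℝ f x‖ ≤ M ∧
      ‖x‖ ^ (1 - θ) * (‖x‖ * ‖fderiv ℝ (fderiv ℝ f) x‖) ≤ M) :
    ∃ C : ℝ, 0 ≤ C ∧ (∀ w : E, ‖fderiv ℝ f w‖ ≤ C * (max 1 ‖w‖) ^ (θ - 1)) ∧
      (∀ w : E, ‖fderiv ℝ (fderiv ℝ f) w‖ ≤ C * (max 1 ‖w‖) ^ (θ - 2)) ∧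
      (∀ w : E, |f w| ≤ C * (1 + ‖w‖) ^ θ) := by
  have hf' : ContDiff ℝ 1 (fderiv ℝ f) := hf.fderiv_right (by norm_num)
  have hd : Differentiable ℝ f := hf.differentiable two_ne_zero
  have hc1 : Continuous (fderiv ℝ f) := hf'.continuous
  have hc2 : Continuous (fderiv ℝ (fderiv ℝ f)) := hf'.continuous_fderiv one_ne_zero
  obtain ⟨K₁, hK₁⟩ := (isCompact_closedBall (0 : E) 1).exists_bound_of_continuousOn
    hc1.continuousOn
  obtain ⟨K₂, hK₂⟩ := (isCompact_closedBall (0 : E) 1).exists_bound_of_continuousOn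
    (f := fderiv ℝ (fderiv ℝ f)) hc2.continuousOn
  set M' : ℝ := max M 0 with hM'
  have hM'0 : 0 ≤ M' := le_max_right _ _
  -- bounds at large x
  have hbig1 : ∀ x : E, 1 ≤ ‖x‖ → ‖fderiv ℝ f x‖ ≤ M' * ‖x‖ ^ (θ - 1) := by
    intro x hx
    have hpos : (0:ℝ) < ‖x‖ := lt_of_lt_of_le one_pos hx
    have h := (hM x hx).1
    have key : ‖x‖ ^ (1 - θ) * ‖x‖ ^ (θ - 1) = 1 := by
      rw [← Real.rpow_add hpos, show (1 - θ) + (θ - 1) = 0 by ring, Real.rpow_zero]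
    calc ‖fderiv ℝ f x‖ = (‖x‖ ^ (1 - θ) * ‖fderiv ℝ f x‖) * ‖x‖ ^ (θ - 1) := by
          rw [mul_comm (‖x‖ ^ (1 - θ)), mul_assoc, key, mul_one]
      _ ≤ M' * ‖x‖ ^ (θ - 1) := mul_le_mul_of_nonneg_right
          (h.trans (le_max_left _ _)) (Real.rpow_nonneg hpos.le _)
  have hbig2 : ∀ x : E, 1 ≤ ‖x‖ → ‖fderiv ℝ (fderiv ℝ f) x‖ ≤ M' * ‖x‖ ^ (θ - 2) := by
    intro x hx
    have hpos : (0:ℝ) < ‖x‖ := lt_of_lt_of_le one_pos hx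
    have h := (hM x hx).2
    have h' : ‖x‖ ^ (2 - θ) * ‖fderiv ℝ (fderiv ℝ f) x‖ ≤ M := by
      have h2 : ‖x‖ ^ (1 - θ) * ‖x‖ = ‖x‖ ^ (2 - θ) := by
        nth_rewrite 2 [← Real.rpow_one ‖x‖]
        rw [← Real.rpow_add hpos, show (1 - θ) + 1 = 2 - θ by ring]
      calc ‖x‖ ^ (2 - θ) * ‖fderiv ℝ (fderiv ℝ f) x‖
          = ‖x‖ ^ (1 - θ) * (‖x‖ * ‖fderiv ℝ (fderiv ℝ f) x‖) := by rw [← h2]; ring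
        _ ≤ M := h
    have key : ‖x‖ ^ (2 - θ) * ‖x‖ ^ (θ - 2) = 1 := by
      rw [← Real.rpow_add hpos, show (2 - θ) + (θ - 2) = 0 by ring, Real.rpow_zero]
    calc ‖fderiv ℝ (fderiv ℝ f) x‖
        = (‖x‖ ^ (2 - θ) * ‖fderiv ℝ (fderiv ℝ f) x‖) * ‖x‖ ^ (θ - 2) := by
          rw [mul_comm (‖x‖ ^ (2 - θ)), mul_assoc, key, mul_one]
      _ ≤ M' * ‖x‖ ^ (θ - 2) := mul_le_mul_of_nonneg_right
          (h'.trans (le_max_left _ _)) (Real.rpow_nonneg hpos.le _)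
  set C₁ : ℝ := max (max K₁ K₂) M' + |f 0| + 1 with hC₁
  have hA : 0 ≤ max (max K₁ K₂) M' := le_trans hM'0 (le_max_right _ _)
  have hC₁0 : (0:ℝ) ≤ C₁ := by have := abs_nonneg (f 0); rw [hC₁]; linarith
  have hK₁C : K₁ ≤ C₁ := by
    have := le_trans (le_max_left K₁ K₂) (le_max_left (max K₁ K₂) M')
    have := abs_nonneg (f 0); rw [hC₁]; linarith
  have hK₂C : K₂ ≤ C₁ := by
    have := le_trans (le_max_right K₁ K₂) (le_max_left (max K₁ K₂) M')
    have := abs_nonneg (f 0); rw [hC₁]; linarith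
  have hM'C : M' ≤ C₁ := by
    have := le_max_right (max K₁ K₂) M'
    have := abs_nonneg (f 0); rw [hC₁]; linarith
  have hfC : |f 0| ≤ C₁ := by rw [hC₁]; linarith
  have ha : ∀ w : E, ‖fderiv ℝ f w‖ ≤ C₁ * (max 1 ‖w‖) ^ (θ - 1) := by
    intro w
    rcases le_total ‖w‖ 1 with h | h
    · rw [max_eq_left h, Real.one_rpow, mul_one]
      exact (hK₁ w (mem_closedBall_zero_iff.mpr h)).trans hK₁C
    · rw [max_eq_right h]
      exact (hbig1 w h).trans (mul_le_mul_of_nonneg_right hM'C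
        (Real.rpow_nonneg (by linarith) _))
  have hb : ∀ w : E, ‖fderiv ℝ (fderiv ℝ f) w‖ ≤ C₁ * (max 1 ‖w‖) ^ (θ - 2) := by
    intro w
    rcases le_total ‖w‖ 1 with h | h
    · rw [max_eq_left h, Real.one_rpow, mul_one]
      exact (hK₂ w (mem_closedBall_zero_iff.mpr h)).trans hK₂C
    · rw [max_eq_right h]
      exact (hbig2 w h).trans (mul_le_mul_of_nonneg_right hM'C
        (Real.rpow_nonneg (by linarith) _))
  refine ⟨C₁, hC₁0, ha, hb, ?_⟩
  intro w
  have h1w : (0:ℝ) < 1 + ‖w‖ := by positivity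
  have hrp1 : (1:ℝ) ≤ (1 + ‖w‖) ^ (θ - 1) :=
    Real.one_le_rpow (by linarith [norm_nonneg w]) (by linarith)
  have hbound : ∀ z ∈ Metric.closedBall (0:E) ‖w‖,
      ‖fderiv ℝ f z‖ ≤ C₁ * (1 + ‖w‖) ^ (θ - 1) := by
    intro z hz
    refine (ha z).trans (mul_le_mul_of_nonneg_left ?_ hC₁0)
    apply Real.rpow_le_rpow (le_trans zero_le_one (le_max_left _ _)) ?_ (by linarith)
    have hz' : ‖z‖ ≤ ‖w‖ := by simpa using hz
    exact max_le (by linarith [norm_nonneg w]) (by linarith)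
  have hmvt : ‖f w - f 0‖ ≤ C₁ * (1 + ‖w‖) ^ (θ - 1) * ‖w - 0‖ :=
    (convex_closedBall (0:E) ‖w‖).norm_image_sub_le_of_norm_fderiv_le
      (fun z _ => hd z) hbound (Metric.mem_closedBall_self (norm_nonneg w))
      (mem_closedBall_zero_iff.mpr le_rfl)
  rw [sub_zero, Real.norm_eq_abs] at hmvt
  have key : (1 + ‖w‖) ^ (θ - 1) * (1 + ‖w‖) = (1 + ‖w‖) ^ θ := by
    rw [← Real.rpow_add_one h1w.ne' (θ - 1), sub_add_cancel]
  calc |f w| ≤ |f 0| + |f w - f 0| := by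
        have h := abs_add_le (f 0) (f w - f 0)
        have : f 0 + (f w - f 0) = f w := by ring
        rw [this] at h; exact h
    _ ≤ C₁ * (1 + ‖w‖) ^ (θ - 1) + C₁ * (1 + ‖w‖) ^ (θ - 1) * ‖w‖ := by
        have h1 : |f 0| ≤ C₁ * (1 + ‖w‖) ^ (θ - 1) := by
          calc |f 0| ≤ C₁ := hfC
            _ = C₁ * 1 := (mul_one _).symm
            _ ≤ C₁ * (1 + ‖w‖) ^ (θ - 1) := mul_le_mul_of_nonneg_left hrp1 hC₁0
        linarith [hmvt]
    _ = C₁ * ((1 + ‖w‖) ^ (θ - 1) * (1 + ‖w‖)) := by ring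
    _ = C₁ * (1 + ‖w‖) ^ θ := by rw [key]



section PW
variable {E : Type*} [NormedAddCommGroup E] [NormedSpace ℝ E] {f : E → ℝ} {θ C : ℝ}

lemma seg_norm_sub_le (x y : E) : ∀ w ∈ segment ℝ x (x + y), ‖w - x‖ ≤ ‖y‖ := by
  rintro w ⟨a, b, ha, hb, hab, rfl⟩
  have h : a • x + b • (x + y) - x = b • y := by
    have hx : a • x + b • x = x := by rw [← add_smul, hab, one_smul]
    rw [smul_add, ← add_assoc, hx]; abel
  rw [h, norm_smul, Real.norm_eq_abs, abs_of_nonneg hb]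
  nlinarith [norm_nonneg y]

lemma P1 (hf : ContDiff ℝ 2 f) (hθ : 1 ≤ θ) (hC : 0 ≤ C)
    (hb : ∀ w : E, ‖fderiv ℝ (fderiv ℝ f) w‖ ≤ C * (max 1 ‖w‖) ^ (θ - 2))
    {x y : E} (hx : 1 ≤ ‖x‖) (hy : ‖y‖ ≤ ‖x‖ / 2) :
    |f (x + y) - f x - fderiv ℝ f x y| ≤
      (C * 2 ^ |θ - 2|) * ‖x‖ ^ (θ - 2) * ‖y‖ ^ 2 := by
  have hxpos : (0:ℝ) < ‖x‖ := lt_of_lt_of_le one_pos hx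
  have key : ∀ w ∈ segment ℝ x (x + y),
      ‖fderiv ℝ (fderiv ℝ f) w‖ ≤ (C * 2 ^ |θ - 2|) * ‖x‖ ^ (θ - 2) := by
    intro w hw
    have hwx := seg_norm_sub_le x y w hw
    have hwlo : ‖x‖ / 2 ≤ ‖w‖ := by
      have := norm_sub_norm_le x w
      have h2 : ‖x - w‖ ≤ ‖y‖ := by rw [← norm_neg, neg_sub]; exact hwx
      linarith
    have hwhi : ‖w‖ ≤ 2 * ‖x‖ := by
      have h3 : ‖w‖ ≤ ‖w - x‖ + ‖x‖ := by
        have := norm_add_le (w - x) x; simpa [sub_add_cancel] using this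
      linarith
    have hblo : ‖x‖ / 2 ≤ max 1 ‖w‖ := le_trans hwlo (le_max_right _ _)
    have hbhi : max 1 ‖w‖ ≤ 2 * ‖x‖ := max_le (by linarith) hwhi
    have hbpos : (0:ℝ) < max 1 ‖w‖ := lt_of_lt_of_le one_pos (le_max_left _ _)
    have hmain : (max 1 ‖w‖) ^ (θ - 2) ≤ 2 ^ |θ - 2| * ‖x‖ ^ (θ - 2) := by
      rcases le_total θ 2 with h2 | h2
      · have habs : |θ - 2| = 2 - θ := by rw [abs_of_nonpos (by linarith)]; ring
        have h4 : (max 1 ‖w‖) ^ (θ - 2) ≤ (‖x‖ / 2) ^ (θ - 2) :=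
          Real.rpow_le_rpow_of_nonpos (by linarith) hblo (by linarith)
        have h5 : (‖x‖ / 2) ^ (θ - 2) = 2 ^ (2 - θ) * ‖x‖ ^ (θ - 2) := by
          rw [Real.div_rpow hxpos.le (by norm_num : (0:ℝ) ≤ 2),
            div_eq_mul_inv, ← Real.rpow_neg (by norm_num : (0:ℝ) ≤ 2)]
          ring_nf
        rw [habs]; rw [h5] at h4; exact h4
      · have habs : |θ - 2| = θ - 2 := abs_of_nonneg (by linarith)
        have h4 : (max 1 ‖w‖) ^ (θ - 2) ≤ (2 * ‖x‖) ^ (θ - 2) :=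
          Real.rpow_le_rpow hbpos.le hbhi (by linarith)
        have h5 : (2 * ‖x‖) ^ (θ - 2) = 2 ^ (θ - 2) * ‖x‖ ^ (θ - 2) :=
          Real.mul_rpow (by norm_num) hxpos.le
        rw [habs]; rw [h5] at h4; exact h4
    calc ‖fderiv ℝ (fderiv ℝ f) w‖ ≤ C * (max 1 ‖w‖) ^ (θ - 2) := hb w
      _ ≤ C * (2 ^ |θ - 2| * ‖x‖ ^ (θ - 2)) := mul_le_mul_of_nonneg_left hmain hC
      _ = (C * 2 ^ |θ - 2|) * ‖x‖ ^ (θ - 2) := by ring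
  exact taylor2 hf x y key

lemma P0 (hf : ContDiff ℝ 2 f) (hθ : 1 ≤ θ) (hC : 0 ≤ C)
    (hb : ∀ w : E, ‖fderiv ℝ (fderiv ℝ f) w‖ ≤ C * (max 1 ‖w‖) ^ (θ - 2))
    {x y : E} (hx : ‖x‖ ≤ 1) (hy : ‖y‖ ≤ 1) :
    |f (x + y) - f x - fderiv ℝ f x y| ≤ (C * 2 ^ |θ - 2|) * ‖y‖ ^ 2 := by
  have key : ∀ w ∈ segment ℝ x (x + y),
      ‖fderiv ℝ (fderiv ℝ f) w‖ ≤ C * 2 ^ |θ - 2| := by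
    intro w hw
    have hwx := seg_norm_sub_le x y w hw
    have hwhi : ‖w‖ ≤ 2 := by
      have h3 : ‖w‖ ≤ ‖w - x‖ + ‖x‖ := by
        have := norm_add_le (w - x) x; simpa [sub_add_cancel] using this
      linarith
    have hbpos : (0:ℝ) < max 1 ‖w‖ := lt_of_lt_of_le one_pos (le_max_left _ _)
    have hone : (1:ℝ) ≤ max 1 ‖w‖ := le_max_left _ _
    have hmain : (max 1 ‖w‖) ^ (θ - 2) ≤ 2 ^ |θ - 2| := by
      rcases le_total θ 2 with h2 | h2
      · calc (max 1 ‖w‖) ^ (θ - 2) ≤ 1 :=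
            Real.rpow_le_one_of_one_le_of_nonpos hone (by linarith)
          _ ≤ 2 ^ |θ - 2| := Real.one_le_rpow one_le_two (abs_nonneg _)
      · have habs : |θ - 2| = θ - 2 := abs_of_nonneg (by linarith)
        rw [habs]
        exact Real.rpow_le_rpow hbpos.le (max_le one_le_two hwhi) (by linarith)
    calc ‖fderiv ℝ (fderiv ℝ f) w‖ ≤ C * (max 1 ‖w‖) ^ (θ - 2) := hb w
      _ ≤ C * 2 ^ |θ - 2| := mul_le_mul_of_nonneg_left hmain hC
  exact taylor2 hf x y key

lemma P2 (hθ : 1 ≤ θ) (hC : 0 ≤ C)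
    (ha : ∀ w : E, ‖fderiv ℝ f w‖ ≤ C * (max 1 ‖w‖) ^ (θ - 1))
    (hcv : ∀ w : E, |f w| ≤ C * (1 + ‖w‖) ^ θ)
    {x y : E} (h4 : 1 + ‖x‖ ≤ 4 * ‖y‖) (hy : 1 / 2 ≤ ‖y‖) :
    |f (x + y) - f x - fderiv ℝ f x y| ≤
      (C * (5 ^ θ + 4 ^ θ + 4 ^ (θ - 1))) * ‖y‖ ^ θ := by
  have hypos : (0:ℝ) < ‖y‖ := by linarith
  have hx0 : (0:ℝ) ≤ ‖x‖ := norm_nonneg x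
  have h1 : |f (x + y)| ≤ C * (5 ^ θ) * ‖y‖ ^ θ := by
    calc |f (x + y)| ≤ C * (1 + ‖x + y‖) ^ θ := hcv _
      _ ≤ C * (5 * ‖y‖) ^ θ := by
          apply mul_le_mul_of_nonneg_left ?_ hC
          apply Real.rpow_le_rpow (by positivity) ?_ (by linarith)
          have := norm_add_le x y; linarith
      _ = C * (5 ^ θ) * ‖y‖ ^ θ := by
          rw [Real.mul_rpow (by norm_num) hypos.le]; ring
  have h2 : |f x| ≤ C * (4 ^ θ) * ‖y‖ ^ θ := by
    calc |f x| ≤ C * (1 + ‖x‖) ^ θ := hcv _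
      _ ≤ C * (4 * ‖y‖) ^ θ := by
          apply mul_le_mul_of_nonneg_left ?_ hC
          exact Real.rpow_le_rpow (by positivity) h4 (by linarith)
      _ = C * (4 ^ θ) * ‖y‖ ^ θ := by
          rw [Real.mul_rpow (by norm_num) hypos.le]; ring
  have h3 : |fderiv ℝ f x y| ≤ C * (4 ^ (θ - 1)) * ‖y‖ ^ θ := by
    calc |fderiv ℝ f x y| ≤ ‖fderiv ℝ f x‖ * ‖y‖ := (fderiv ℝ f x).le_opNorm y
      _ ≤ (C * (max 1 ‖x‖) ^ (θ - 1)) * ‖y‖ :=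
          mul_le_mul_of_nonneg_right (ha x) hypos.le
      _ ≤ (C * (4 * ‖y‖) ^ (θ - 1)) * ‖y‖ := by
          apply mul_le_mul_of_nonneg_right ?_ hypos.le
          apply mul_le_mul_of_nonneg_left ?_ hC
          apply Real.rpow_le_rpow (by positivity) ?_ (by linarith)
          exact max_le (by linarith) (by linarith)
      _ = C * (4 ^ (θ - 1)) * (‖y‖ ^ (θ - 1) * ‖y‖) := by
          rw [Real.mul_rpow (by norm_num) hypos.le]; ring
      _ = C * (4 ^ (θ - 1)) * ‖y‖ ^ θ := by
          rw [← Real.rpow_add_one hypos.ne' (θ - 1), sub_add_cancel]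
  have habs : |f (x + y) - f x - fderiv ℝ f x y| ≤
      |f (x + y)| + |f x| + |fderiv ℝ f x y| := by
    have := abs_sub (f (x + y) - f x) (fderiv ℝ f x y)
    have := abs_sub (f (x + y)) (f x)
    calc |f (x + y) - f x - fderiv ℝ f x y| ≤ |f (x + y) - f x| + |fderiv ℝ f x y| :=
          abs_sub _ _
      _ ≤ |f (x + y)| + |f x| + |fderiv ℝ f x y| := by
          linarith [abs_sub (f (x + y)) (f x)]
  calc |f (x + y) - f x - fderiv ℝ f x y| ≤ |f (x + y)| + |f x| + |fderiv ℝ f x y| := habs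
    _ ≤ C * (5 ^ θ) * ‖y‖ ^ θ + C * (4 ^ θ) * ‖y‖ ^ θ + C * (4 ^ (θ - 1)) * ‖y‖ ^ θ := by
        linarith
    _ = (C * (5 ^ θ + 4 ^ θ + 4 ^ (θ - 1))) * ‖y‖ ^ θ := by ring

end PW

theorem levyJ_vanishes_or_bounded {n : ℕ}
    (ν : EuclideanSpace ℝ (Fin n) → Measure (EuclideanSpace ℝ (Fin n)))
    (hν : IsLevyKernel ν)
    (θ : ℝ) (hθ : 1 ≤ θ)
    (hmom : MomentCondition ν θ) (htail : TailCondition ν θ)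
    (f : EuclideanSpace ℝ (Fin n) → ℝ) (hf : ContDiff ℝ 2 f)
    (hgrowth : ∃ M : ℝ, ∀ x : EuclideanSpace ℝ (Fin n), 1 ≤ ‖x‖ →
      ‖x‖ ^ (1 - θ) * ‖fderiv ℝ f x‖ ≤ M ∧
        ‖x‖ ^ (1 - θ) * (‖x‖ * ‖fderiv ℝ (fderiv ℝ f) x‖) ≤ M) :
    (θ < 2 → Tendsto (levyJ ν f) (Bornology.cobounded _) (nhds 0)) ∧
    (2 ≤ θ → ∃ M : ℝ, ∀ x : EuclideanSpace ℝ (Fin n),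
      |(1 + ‖x‖) ^ (2 - θ) * levyJ ν f x| ≤ M) := by
  obtain ⟨Mθ, hMθtop, hMθ⟩ := hmom
  obtain ⟨Mg, hMg⟩ := hgrowth
  obtain ⟨C, hC, ha, hb, hcv⟩ := growth_bounds hf hθ hMg
  set φ : EuclideanSpace ℝ (Fin n) → ℝ := fun y => if ‖y‖ < 1 then ‖y‖ ^ 2 else ‖y‖ ^ θ with hφdef
  have hMθ' : ∀ x, (∫⁻ y, ENNReal.ofReal (φ y) ∂(ν x)) ≤ Mθ := fun x => hMθ x
  have hφ0 : ∀ y, 0 ≤ φ y := by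
    intro y; rw [hφdef]; dsimp only
    split
    · positivity
    · exact Real.rpow_nonneg (norm_nonneg y) θ
  have hφmeas : Measurable fun y : EuclideanSpace ℝ (Fin n) => ENNReal.ofReal (φ y) := by
    apply Measurable.ennreal_ofReal
    rw [hφdef]
    exact Measurable.ite (measurableSet_lt measurable_norm measurable_const)
      (measurable_norm.pow_const 2)
      ((continuous_norm.rpow_const (fun _ => Or.inr (by linarith))).measurable)
  set c₁ : ℝ := C * 2 ^ |θ - 2| with hc₁def
  set c₂ : ℝ := C * (5 ^ θ + 4 ^ θ + 4 ^ (θ - 1)) with hc₂def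
  set c : ℝ := c₁ + c₂ with hcdef
  have hc₁0 : 0 ≤ c₁ := mul_nonneg hC (Real.rpow_nonneg (by norm_num) _)
  have hc₂0 : 0 ≤ c₂ := by
    apply mul_nonneg hC
    have h5 : (0:ℝ) < 5 ^ θ := Real.rpow_pos_of_pos (by norm_num) _
    have h4 : (0:ℝ) < 4 ^ θ := Real.rpow_pos_of_pos (by norm_num) _
    have h4' : (0:ℝ) < 4 ^ (θ - 1) := Real.rpow_pos_of_pos (by norm_num) _
    linarith
  have hc0 : 0 ≤ c := add_nonneg hc₁0 hc₂0
  -- basic bound via lintegral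
  have hJle : ∀ x : EuclideanSpace ℝ (Fin n), |levyJ ν f x| ≤
      (∫⁻ y, ENNReal.ofReal |f (x + y) - f x - fderiv ℝ f x y| ∂(ν x)).toReal := by
    intro x
    have h := MeasureTheory.norm_integral_le_lintegral_norm (μ := ν x)
      (fun y => f (x + y) - f x - fderiv ℝ f x y)
    simpa [levyJ, Real.norm_eq_abs] using h
  -- global bound transfer
  have key1 : ∀ (x : EuclideanSpace ℝ (Fin n)) (b : ℝ), 0 ≤ b →
      (∀ y, |f (x + y) - f x - fderiv ℝ f x y| ≤ b * φ y) →
      |levyJ ν f x| ≤ b * Mθ.toReal := by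
    intro x b hb0 hby
    have h1 : (∫⁻ y, ENNReal.ofReal |f (x + y) - f x - fderiv ℝ f x y| ∂(ν x)) ≤
        ENNReal.ofReal b * Mθ := by
      calc (∫⁻ y, ENNReal.ofReal |f (x + y) - f x - fderiv ℝ f x y| ∂(ν x))
          ≤ ∫⁻ y, ENNReal.ofReal b * ENNReal.ofReal (φ y) ∂(ν x) := by
            apply lintegral_mono
            intro y
            dsimp only
            rw [← ENNReal.ofReal_mul hb0]
            exact ENNReal.ofReal_le_ofReal (hby y)
        _ = ENNReal.ofReal b * ∫⁻ y, ENNReal.ofReal (φ y) ∂(ν x) :=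
            lintegral_const_mul' _ _ ENNReal.ofReal_ne_top
        _ ≤ ENNReal.ofReal b * Mθ := mul_le_mul_right (hMθ' x) _
    calc |levyJ ν f x| ≤ _ := hJle x
      _ ≤ (ENNReal.ofReal b * Mθ).toReal :=
          ENNReal.toReal_mono (ENNReal.mul_ne_top ENNReal.ofReal_ne_top hMθtop) h1
      _ = b * Mθ.toReal := by rw [ENNReal.toReal_mul, ENNReal.toReal_ofReal hb0]
  -- pointwise bound (A) : small x
  have bndA : ∀ x : EuclideanSpace ℝ (Fin n), ‖x‖ ≤ 1 → ∀ y,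
      |f (x + y) - f x - fderiv ℝ f x y| ≤ c * φ y := by
    intro x hx y
    by_cases hy : ‖y‖ ≤ 1
    · have h := P0 hf hθ hC hb hx hy
      have hφy : ‖y‖ ^ 2 ≤ φ y := by
        rw [hφdef]; dsimp only
        split
        · exact le_rfl
        · next h1 =>
            have hy1 : ‖y‖ = 1 := le_antisymm hy (not_lt.mp h1)
            rw [hy1, Real.one_rpow]; norm_num
      calc |f (x + y) - f x - fderiv ℝ f x y| ≤ c₁ * ‖y‖ ^ 2 := h
        _ ≤ c₁ * φ y := mul_le_mul_of_nonneg_left hφy hc₁0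
        _ ≤ c * φ y := mul_le_mul_of_nonneg_right (by rw [hcdef]; linarith) (hφ0 y)
    · push_neg at hy
      have h4 : 1 + ‖x‖ ≤ 4 * ‖y‖ := by linarith
      have hy2 : 1 / 2 ≤ ‖y‖ := by linarith
      have h := P2 hθ hC ha hcv h4 hy2
      have hφy : φ y = ‖y‖ ^ θ := by rw [hφdef]; dsimp only; rw [if_neg (not_lt.mpr hy.le)]
      calc |f (x + y) - f x - fderiv ℝ f x y| ≤ c₂ * ‖y‖ ^ θ := h
        _ = c₂ * φ y := by rw [hφy]
        _ ≤ c * φ y := mul_le_mul_of_nonneg_right (by rw [hcdef]; linarith) (hφ0 y)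
  -- pointwise bound (B) : θ ≥ 2, large x
  have bndB : 2 ≤ θ → ∀ x : EuclideanSpace ℝ (Fin n), 1 ≤ ‖x‖ → ∀ y,
      |f (x + y) - f x - fderiv ℝ f x y| ≤ (c * ‖x‖ ^ (θ - 2)) * φ y := by
    intro hθ2 x hx y
    have hxpow0 : (0:ℝ) ≤ ‖x‖ ^ (θ - 2) := Real.rpow_nonneg (norm_nonneg x) _
    have hxpow1 : (1:ℝ) ≤ ‖x‖ ^ (θ - 2) := Real.one_le_rpow hx (by linarith)
    by_cases hy : ‖y‖ ≤ ‖x‖ / 2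
    · have h := P1 hf hθ hC hb hx hy
      have hφy : ‖y‖ ^ 2 ≤ φ y := by
        rw [hφdef]; dsimp only
        split
        · exact le_rfl
        · next h1 =>
            have h1' : (1:ℝ) ≤ ‖y‖ := not_lt.mp h1
            calc ‖y‖ ^ 2 = ‖y‖ ^ ((2:ℕ):ℝ) := (Real.rpow_natCast _ 2).symm
              _ ≤ ‖y‖ ^ θ := Real.rpow_le_rpow_of_exponent_le h1' (by norm_num; exact hθ2)
      calc |f (x + y) - f x - fderiv ℝ f x y| ≤ c₁ * ‖x‖ ^ (θ - 2) * ‖y‖ ^ 2 := h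
        _ ≤ c₁ * ‖x‖ ^ (θ - 2) * φ y :=
            mul_le_mul_of_nonneg_left hφy (mul_nonneg hc₁0 hxpow0)
        _ ≤ (c * ‖x‖ ^ (θ - 2)) * φ y := by
            apply mul_le_mul_of_nonneg_right ?_ (hφ0 y)
            apply mul_le_mul_of_nonneg_right ?_ hxpow0
            rw [hcdef]; linarith
    · push_neg at hy
      have hy2 : 1 / 2 ≤ ‖y‖ := by linarith
      have hypos : (0:ℝ) < ‖y‖ := by linarith
      have h4 : 1 + ‖x‖ ≤ 4 * ‖y‖ := by linarith
      have h := P2 hθ hC ha hcv h4 hy2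
      have hφy : ‖y‖ ^ θ ≤ ‖x‖ ^ (θ - 2) * φ y := by
        rw [hφdef]; dsimp only
        split
        · next h1 =>
            have : ‖y‖ ^ θ ≤ ‖y‖ ^ ((2:ℕ):ℝ) :=
              Real.rpow_le_rpow_of_exponent_ge hypos h1.le (by norm_num; exact hθ2)
            rw [Real.rpow_natCast] at this
            calc ‖y‖ ^ θ ≤ ‖y‖ ^ 2 := this
              _ = 1 * ‖y‖ ^ 2 := (one_mul _).symm
              _ ≤ ‖x‖ ^ (θ - 2) * ‖y‖ ^ 2 :=
                  mul_le_mul_of_nonneg_right hxpow1 (by positivity)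
        · calc ‖y‖ ^ θ = 1 * ‖y‖ ^ θ := (one_mul _).symm
            _ ≤ ‖x‖ ^ (θ - 2) * ‖y‖ ^ θ :=
                mul_le_mul_of_nonneg_right hxpow1 (Real.rpow_nonneg hypos.le _)
      calc |f (x + y) - f x - fderiv ℝ f x y| ≤ c₂ * ‖y‖ ^ θ := h
        _ ≤ c₂ * (‖x‖ ^ (θ - 2) * φ y) := mul_le_mul_of_nonneg_left hφy hc₂0
        _ ≤ (c * ‖x‖ ^ (θ - 2)) * φ y := by
            rw [← mul_assoc]
            apply mul_le_mul_of_nonneg_right ?_ (hφ0 y)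
            apply mul_le_mul_of_nonneg_right ?_ hxpow0
            rw [hcdef]; linarith
    -- pointwise bounds for θ ≤ 2 with split radius r
  have bndC1 : θ ≤ 2 → ∀ (x : EuclideanSpace ℝ (Fin n)) (r : ℝ), 1 ≤ r → 2 * r ≤ ‖x‖ →
      1 ≤ ‖x‖ → ∀ y, ‖y‖ ≤ r →
      |f (x + y) - f x - fderiv ℝ f x y| ≤ (c * r ^ (2 - θ) * ‖x‖ ^ (θ - 2)) * φ y := by
    intro hθ2 x r hr1 hxr hx1 y hy
    have hx2 : ‖y‖ ≤ ‖x‖ / 2 := by linarith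
    have h := P1 hf hθ hC hb hx1 hx2
    have hrpow0 : (0:ℝ) ≤ r ^ (2 - θ) := Real.rpow_nonneg (by linarith) _
    have hrpow1 : (1:ℝ) ≤ r ^ (2 - θ) := Real.one_le_rpow hr1 (by linarith)
    have hφy : ‖y‖ ^ 2 ≤ r ^ (2 - θ) * φ y := by
      rw [hφdef]; dsimp only
      split
      · calc ‖y‖ ^ 2 = 1 * ‖y‖ ^ 2 := (one_mul _).symm
          _ ≤ r ^ (2 - θ) * ‖y‖ ^ 2 := mul_le_mul_of_nonneg_right hrpow1 (by positivity)
      · next h1 =>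
          have h1' : (1:ℝ) ≤ ‖y‖ := not_lt.mp h1
          have hypos : (0:ℝ) < ‖y‖ := by linarith
          have hsplit : ‖y‖ ^ ((2:ℕ):ℝ) = ‖y‖ ^ θ * ‖y‖ ^ (2 - θ) := by
            rw [← Real.rpow_add hypos, show θ + (2 - θ) = ((2:ℕ):ℝ) by norm_num]
          calc ‖y‖ ^ 2 = ‖y‖ ^ ((2:ℕ):ℝ) := (Real.rpow_natCast _ 2).symm
            _ = ‖y‖ ^ θ * ‖y‖ ^ (2 - θ) := hsplit
            _ ≤ ‖y‖ ^ θ * r ^ (2 - θ) := mul_le_mul_of_nonneg_left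
                (Real.rpow_le_rpow hypos.le (by linarith) (by linarith))
                (Real.rpow_nonneg hypos.le _)
            _ = r ^ (2 - θ) * ‖y‖ ^ θ := mul_comm _ _
    have hxpow0 : (0:ℝ) ≤ ‖x‖ ^ (θ - 2) := Real.rpow_nonneg (norm_nonneg x) _
    calc |f (x + y) - f x - fderiv ℝ f x y| ≤ c₁ * ‖x‖ ^ (θ - 2) * ‖y‖ ^ 2 := h
      _ ≤ c₁ * ‖x‖ ^ (θ - 2) * (r ^ (2 - θ) * φ y) :=
          mul_le_mul_of_nonneg_left hφy (mul_nonneg hc₁0 hxpow0)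
      _ = (c₁ * r ^ (2 - θ) * ‖x‖ ^ (θ - 2)) * φ y := by ring
      _ ≤ (c * r ^ (2 - θ) * ‖x‖ ^ (θ - 2)) * φ y := by
          apply mul_le_mul_of_nonneg_right ?_ (hφ0 y)
          apply mul_le_mul_of_nonneg_right ?_ hxpow0
          apply mul_le_mul_of_nonneg_right ?_ hrpow0
          rw [hcdef]; linarith
  have bndC2 : θ ≤ 2 → ∀ (x : EuclideanSpace ℝ (Fin n)) (r : ℝ), 1 ≤ r → 2 * r ≤ ‖x‖ →
      1 ≤ ‖x‖ → ∀ y, r < ‖y‖ →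
      |f (x + y) - f x - fderiv ℝ f x y| ≤ c * ‖y‖ ^ θ := by
    intro hθ2 x r hr1 hxr hx1 y hyr
    have hy1 : (1:ℝ) ≤ ‖y‖ := by linarith
    have hypos : (0:ℝ) < ‖y‖ := by linarith
    by_cases hyx : ‖y‖ ≤ ‖x‖ / 2
    · have h := P1 hf hθ hC hb hx1 hyx
      have hxle : ‖x‖ ^ (θ - 2) ≤ 2 ^ (θ - 2) * ‖y‖ ^ (θ - 2) := by
        have h1 : ‖x‖ ^ (θ - 2) ≤ (2 * ‖y‖) ^ (θ - 2) :=
          Real.rpow_le_rpow_of_nonpos (by linarith) (by linarith) (by linarith)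
        rwa [Real.mul_rpow (by norm_num) hypos.le] at h1
      have h2pow : (2:ℝ) ^ (θ - 2) ≤ 1 :=
        Real.rpow_le_one_of_one_le_of_nonpos one_le_two (by linarith)
      have hcomb : ‖y‖ ^ (θ - 2) * ‖y‖ ^ 2 = ‖y‖ ^ θ := by
        rw [show (‖y‖:ℝ) ^ 2 = ‖y‖ ^ ((2:ℕ):ℝ) from (Real.rpow_natCast _ 2).symm,
          ← Real.rpow_add hypos, show θ - 2 + ((2:ℕ):ℝ) = θ by norm_num]
      calc |f (x + y) - f x - fderiv ℝ f x y| ≤ c₁ * ‖x‖ ^ (θ - 2) * ‖y‖ ^ 2 := h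
        _ ≤ c₁ * (2 ^ (θ - 2) * ‖y‖ ^ (θ - 2)) * ‖y‖ ^ 2 :=
            mul_le_mul_of_nonneg_right (mul_le_mul_of_nonneg_left hxle hc₁0) (by positivity)
        _ = c₁ * 2 ^ (θ - 2) * (‖y‖ ^ (θ - 2) * ‖y‖ ^ 2) := by ring
        _ = c₁ * 2 ^ (θ - 2) * ‖y‖ ^ θ := by rw [hcomb]
        _ ≤ c₁ * 1 * ‖y‖ ^ θ := mul_le_mul_of_nonneg_right
            (mul_le_mul_of_nonneg_left h2pow hc₁0) (Real.rpow_nonneg hypos.le _)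
        _ ≤ c * ‖y‖ ^ θ := by
            rw [mul_one]
            apply mul_le_mul_of_nonneg_right ?_ (Real.rpow_nonneg hypos.le _)
            rw [hcdef]; linarith
    · push_neg at hyx
      have h4 : 1 + ‖x‖ ≤ 4 * ‖y‖ := by linarith
      have h := P2 hθ hC ha hcv h4 (by linarith)
      calc |f (x + y) - f x - fderiv ℝ f x y| ≤ c₂ * ‖y‖ ^ θ := h
        _ ≤ c * ‖y‖ ^ θ := mul_le_mul_of_nonneg_right (by rw [hcdef]; linarith)
            (Real.rpow_nonneg hypos.le _)
  -- the tail supremum function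
  set S : ℝ → ℝ≥0∞ :=
    fun r => ⨆ x, ∫⁻ y in {y | r < ‖y‖}, ENNReal.ofReal (‖y‖ ^ θ) ∂(ν x) with hSdef
  have htail' : Tendsto S atTop (nhds 0) := htail
  have hmnorm : Measurable fun y : EuclideanSpace ℝ (Fin n) => ENNReal.ofReal (‖y‖ ^ θ) :=
    (continuous_norm.rpow_const (fun _ => Or.inr (by linarith))).measurable.ennreal_ofReal
  -- split bound transfer
  have key2 : ∀ (x : EuclideanSpace ℝ (Fin n)) (r b₁ b₂ : ℝ), 0 ≤ b₁ → 0 ≤ b₂ → S r ≠ ⊤ →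
      (∀ y, ‖y‖ ≤ r → |f (x + y) - f x - fderiv ℝ f x y| ≤ b₁ * φ y) →
      (∀ y, r < ‖y‖ → |f (x + y) - f x - fderiv ℝ f x y| ≤ b₂ * ‖y‖ ^ θ) →
      |levyJ ν f x| ≤ b₁ * Mθ.toReal + b₂ * (S r).toReal := by
    intro x r b₁ b₂ hb₁ hb₂ hStop h1 h2
    set s : Set (EuclideanSpace ℝ (Fin n)) := {y | ‖y‖ ≤ r} with hsdef
    have hs : MeasurableSet s := measurableSet_le measurable_norm measurable_const
    have hsc : sᶜ = {y | r < ‖y‖} := by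
      ext y; simp [hsdef, Set.mem_setOf_eq, not_le]
    have hIs : (∫⁻ y in s, ENNReal.ofReal |f (x + y) - f x - fderiv ℝ f x y| ∂(ν x)) ≤
        ENNReal.ofReal b₁ * Mθ := by
      calc (∫⁻ y in s, ENNReal.ofReal |f (x + y) - f x - fderiv ℝ f x y| ∂(ν x))
          ≤ ∫⁻ y in s, ENNReal.ofReal b₁ * ENNReal.ofReal (φ y) ∂(ν x) := by
            apply setLIntegral_mono (hφmeas.const_mul _)
            intro y hy
            rw [← ENNReal.ofReal_mul hb₁]
            exact ENNReal.ofReal_le_ofReal (h1 y hy)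
        _ ≤ ∫⁻ y, ENNReal.ofReal b₁ * ENNReal.ofReal (φ y) ∂(ν x) :=
            setLIntegral_le_lintegral _ _
        _ = ENNReal.ofReal b₁ * ∫⁻ y, ENNReal.ofReal (φ y) ∂(ν x) :=
            lintegral_const_mul' _ _ ENNReal.ofReal_ne_top
        _ ≤ ENNReal.ofReal b₁ * Mθ := mul_le_mul_right (hMθ' x) _
    have hIsc : (∫⁻ y in sᶜ, ENNReal.ofReal |f (x + y) - f x - fderiv ℝ f x y| ∂(ν x)) ≤
        ENNReal.ofReal b₂ * S r := by
      calc (∫⁻ y in sᶜ, ENNReal.ofReal |f (x + y) - f x - fderiv ℝ f x y| ∂(ν x))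
          ≤ ∫⁻ y in sᶜ, ENNReal.ofReal b₂ * ENNReal.ofReal (‖y‖ ^ θ) ∂(ν x) := by
            apply setLIntegral_mono (hmnorm.const_mul _)
            intro y hy
            have hy' : r < ‖y‖ := by
              rw [hsc] at hy; exact hy
            rw [← ENNReal.ofReal_mul hb₂]
            exact ENNReal.ofReal_le_ofReal (h2 y hy')
        _ = ENNReal.ofReal b₂ * ∫⁻ y in sᶜ, ENNReal.ofReal (‖y‖ ^ θ) ∂(ν x) :=
            lintegral_const_mul' _ _ ENNReal.ofReal_ne_top
        _ ≤ ENNReal.ofReal b₂ * S r := by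
            apply mul_le_mul_right
            rw [hsc, hSdef]
            exact le_iSup (fun x => ∫⁻ y in {y | r < ‖y‖}, ENNReal.ofReal (‖y‖ ^ θ) ∂(ν x)) x
    have htot : (∫⁻ y, ENNReal.ofReal |f (x + y) - f x - fderiv ℝ f x y| ∂(ν x)) ≤
        ENNReal.ofReal b₁ * Mθ + ENNReal.ofReal b₂ * S r := by
      rw [← lintegral_add_compl
        (fun y => ENNReal.ofReal |f (x + y) - f x - fderiv ℝ f x y|) hs (μ := ν x)]
      exact add_le_add hIs hIsc
    have hfin1 : ENNReal.ofReal b₁ * Mθ ≠ ⊤ := ENNReal.mul_ne_top ENNReal.ofReal_ne_top hMθtop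
    have hfin2 : ENNReal.ofReal b₂ * S r ≠ ⊤ := ENNReal.mul_ne_top ENNReal.ofReal_ne_top hStop
    calc |levyJ ν f x| ≤ _ := hJle x
      _ ≤ (ENNReal.ofReal b₁ * Mθ + ENNReal.ofReal b₂ * S r).toReal :=
          ENNReal.toReal_mono (ENNReal.add_ne_top.mpr ⟨hfin1, hfin2⟩) htot
      _ = b₁ * Mθ.toReal + b₂ * (S r).toReal := by
          rw [ENNReal.toReal_add hfin1 hfin2, ENNReal.toReal_mul, ENNReal.toReal_mul,
            ENNReal.toReal_ofReal hb₁, ENNReal.toReal_ofReal hb₂]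
  constructor
  · -- θ < 2 : levyJ vanishes at infinity
    intro hθ2
    rw [Metric.tendsto_nhds]
    intro ε hε
    have hcpos : (0:ℝ) < c + 1 := by linarith
    set δ : ℝ := ε / (2 * (c + 1)) with hδdef
    have hδpos : 0 < δ := by positivity
    obtain ⟨r, hrS, hr1⟩ := ((htail'.eventually
      (gt_mem_nhds (ENNReal.ofReal_pos.mpr hδpos))).and (eventually_ge_atTop (1:ℝ))).exists
    have hStop : S r ≠ ⊤ := (hrS.trans ENNReal.ofReal_lt_top).ne
    have hrpow0 : (0:ℝ) ≤ r ^ (2 - θ) := Real.rpow_nonneg (by linarith) _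
    set A : ℝ := c * r ^ (2 - θ) * Mθ.toReal + 1 with hAdef
    have hApos : (0:ℝ) < A := by
      have := mul_nonneg (mul_nonneg hc0 hrpow0) (ENNReal.toReal_nonneg (a := Mθ))
      rw [hAdef]; linarith
    set δ₂ : ℝ := (ε / 2) / A with hδ₂def
    have hδ₂pos : 0 < δ₂ := by positivity
    have hδ₂eq : δ₂ * A = ε / 2 := by
      rw [hδ₂def]; field_simp
    obtain ⟨R, hRpow, hRge⟩ := (((tendsto_rpow_neg_atTop
      (by linarith : (0:ℝ) < 2 - θ)).eventually (gt_mem_nhds hδ₂pos)).and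
      (eventually_ge_atTop (max 1 (2 * r)))).exists
    have hev : ∀ᶠ x : EuclideanSpace ℝ (Fin n) in Bornology.cobounded _, R ≤ ‖x‖ :=
      tendsto_norm_cobounded_atTop.eventually_ge_atTop R
    filter_upwards [hev] with x hx
    rw [Real.dist_eq, sub_zero]
    have hR1 : (1:ℝ) ≤ R := le_trans (le_max_left _ _) hRge
    have h2r : 2 * r ≤ R := le_trans (le_max_right _ _) hRge
    have hx1 : 1 ≤ ‖x‖ := le_trans hR1 hx
    have hxpos : (0:ℝ) < ‖x‖ := by linarith
    have hxr : 2 * r ≤ ‖x‖ := le_trans h2r hx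
    have hxpow0 : (0:ℝ) ≤ ‖x‖ ^ (θ - 2) := Real.rpow_nonneg hxpos.le _
    have hb₁0 : 0 ≤ c * r ^ (2 - θ) * ‖x‖ ^ (θ - 2) :=
      mul_nonneg (mul_nonneg hc0 hrpow0) hxpow0
    have hkey := key2 x r (c * r ^ (2 - θ) * ‖x‖ ^ (θ - 2)) c hb₁0 hc0 hStop
      (fun y hy => bndC1 hθ2.le x r hr1 hxr hx1 y hy)
      (fun y hy => bndC2 hθ2.le x r hr1 hxr hx1 y hy)
    have hxpow : ‖x‖ ^ (θ - 2) ≤ δ₂ := by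
      have h1 : ‖x‖ ^ (θ - 2) ≤ R ^ (θ - 2) :=
        Real.rpow_le_rpow_of_nonpos (by linarith) hx (by linarith)
      have h2 : R ^ (θ - 2) = R ^ (-(2 - θ)) := by ring_nf
      rw [h2] at h1
      exact h1.trans hRpow.le
    have hterm1 : c * r ^ (2 - θ) * ‖x‖ ^ (θ - 2) * Mθ.toReal ≤ ε / 2 := by
      have heq : c * r ^ (2 - θ) * ‖x‖ ^ (θ - 2) * Mθ.toReal =
          (c * r ^ (2 - θ) * Mθ.toReal) * ‖x‖ ^ (θ - 2) := by ring
      rw [heq]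
      have hle : c * r ^ (2 - θ) * Mθ.toReal ≤ A := by rw [hAdef]; linarith
      calc (c * r ^ (2 - θ) * Mθ.toReal) * ‖x‖ ^ (θ - 2) ≤ A * δ₂ :=
            mul_le_mul hle hxpow hxpow0 hApos.le
        _ = ε / 2 := by rw [mul_comm]; exact hδ₂eq
    have hterm2 : c * (S r).toReal < ε / 2 := by
      have hSle : (S r).toReal ≤ δ := ENNReal.toReal_le_of_le_ofReal hδpos.le hrS.le
      have h1 : c * (S r).toReal ≤ c * δ :=
        mul_le_mul_of_nonneg_left hSle hc0
      have h2 : c * δ < (c + 1) * δ := mul_lt_mul_of_pos_right (lt_add_one c) hδpos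
      have h3 : (c + 1) * δ = ε / 2 := by
        rw [hδdef]; field_simp
      exact lt_of_le_of_lt h1 (lt_of_lt_of_eq h2 h3)
    calc |levyJ ν f x| ≤ c * r ^ (2 - θ) * ‖x‖ ^ (θ - 2) * Mθ.toReal + c * (S r).toReal :=
          hkey
      _ < ε := by
          have h := add_lt_add_of_le_of_lt hterm1 hterm2
          exact h.trans_eq (by ring)
  · -- θ ≥ 2 : weighted boundedness
    intro hθ2
    refine ⟨c * Mθ.toReal, fun x => ?_⟩
    have h2θ : 2 - θ ≤ 0 := by linarith
    have h1x0 : (0:ℝ) ≤ (1 + ‖x‖) ^ (2 - θ) := Real.rpow_nonneg (by positivity) _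
    rw [abs_mul, abs_of_nonneg h1x0]
    rcases le_total ‖x‖ 1 with hx | hx
    · have hJ := key1 x c hc0 (bndA x hx)
      have hle1 : (1 + ‖x‖) ^ (2 - θ) ≤ 1 :=
        Real.rpow_le_one_of_one_le_of_nonpos (by linarith [norm_nonneg x]) h2θ
      calc (1 + ‖x‖) ^ (2 - θ) * |levyJ ν f x| ≤ 1 * (c * Mθ.toReal) :=
            mul_le_mul hle1 hJ (abs_nonneg _) one_pos.le
        _ = c * Mθ.toReal := one_mul _
    · have hxpos : (0:ℝ) < ‖x‖ := by linarith
      have hxpow0 : (0:ℝ) ≤ ‖x‖ ^ (θ - 2) := Real.rpow_nonneg hxpos.le _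
      have hJ := key1 x (c * ‖x‖ ^ (θ - 2)) (mul_nonneg hc0 hxpow0) (bndB hθ2 x hx)
      have hle : (1 + ‖x‖) ^ (2 - θ) ≤ ‖x‖ ^ (2 - θ) :=
        Real.rpow_le_rpow_of_nonpos hxpos (by linarith) h2θ
      have hone : ‖x‖ ^ (2 - θ) * ‖x‖ ^ (θ - 2) = 1 := by
        rw [← Real.rpow_add hxpos, show (2 - θ) + (θ - 2) = 0 by ring, Real.rpow_zero]
      calc (1 + ‖x‖) ^ (2 - θ) * |levyJ ν f x|
          ≤ ‖x‖ ^ (2 - θ) * (c * ‖x‖ ^ (θ - 2) * Mθ.toReal) :=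
            mul_le_mul hle hJ (abs_nonneg _) (Real.rpow_nonneg hxpos.le _)
        _ = (‖x‖ ^ (2 - θ) * ‖x‖ ^ (θ - 2)) * (c * Mθ.toReal) := by ring
        _ = c * Mθ.toReal := by rw [hone, one_mul]
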